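/- Let g(x) ∈ 𝔽_q[x] be monic irreducible of degree r with g(0) ≠ 0, let α ∈ 𝔽_q satisfy 𝔽_q = 𝔽_p(α), and let h ≥ 1. For any polynomial f(x) = 1 + f_h(x)·g(x)^h + m(x)·g(x)^{h+1} ∈ 𝔽_q[x] with deg f_h(x) < r, there exist integers c_{(i,j)} ∈ {0, 1, …, p−1} for 0 ≤ i < δ and 0 ≤ j < r such that Π_{i,j} (1 + α^i x^j g(x)^h)^{c_{(i,j)}} ≡ f(x) (mod g(x)^{h+1}). -/

import Mathlib

open Polynomial

lemma aux_mul {Q : Type*} [CommRing Q] {u : Q} (hu : u * u = 0) (a b : Q) :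
    (1 + a * u) * (1 + b * u) = 1 + (a + b) * u := by
  linear_combination a * b * hu

lemma aux_pow {Q : Type*} [CommRing Q] {u : Q} (hu : u * u = 0) (a : Q) (n : ℕ) :
    (1 + a * u) ^ n = 1 + (n : Q) * a * u := by
  induction n with
  | zero => simp
  | succ n ih =>
    rw [pow_succ, ih, aux_mul hu]
    push_cast
    ring

lemma aux_prod {Q : Type*} [CommRing Q] {u : Q} (hu : u * u = 0) {ι : Type*}
    (s : Finset ι) (a : ι → Q) :
    (∏ t ∈ s, (1 + a t * u)) = 1 + (∑ t ∈ s, a t) * u := by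
  classical
  induction s using Finset.induction with
  | empty => simp
  | @insert _ _ hx ih =>
    rw [Finset.prod_insert hx, ih, aux_mul hu, Finset.sum_insert hx]

/-- For any polynomial `f(x) = 1 + f_h(x)g(x)^h + m(x)g(x)^{h+1}` with
`deg f_h < r`, there exist exponents `c_{(i,j)} ∈ {0,…,p-1}` such that
`Π_{i,j} (1 + α^i x^j g(x)^h)^{c_{(i,j)}} ≡ f(x) (mod g(x)^{h+1})`. -/
theorem stmt_14
    (p δ : ℕ) (hp : p.Prime) (hδ : 1 ≤ δ)
    (F : Type) [Field F] [Fintype F] [CharP F p] (hcard : Fintype.card F = p ^ δ)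
    (α : F) (hα : ∀ y : F, ∃ c : Fin δ → ℕ, y = ∑ i, (c i : F) * α ^ (i : ℕ))
    (r : ℕ) (g : Polynomial F)
    (hmonic : g.Monic) (hirr : Irreducible g) (hdeg : g.natDegree = r)
    (hg0 : g.coeff 0 ≠ 0)
    (h : ℕ) (hh : 1 ≤ h)
    (f fh m : Polynomial F) (hfh : fh.degree < (r : WithBot ℕ))
    (hf : f = 1 + fh * g ^ h + m * g ^ (h + 1)) :
    ∃ c : Fin δ → Fin r → ℕ, (∀ i j, c i j < p) ∧
      g ^ (h + 1) ∣
        (∏ i : Fin δ, ∏ j : Fin r,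
          (1 + Polynomial.C (α ^ (i : ℕ)) * X ^ (j : ℕ) * g ^ h) ^ (c i j)) - f := by
  have hr1 : 1 ≤ r := by
    rw [← hdeg]
    exact hirr.natDegree_pos
  choose cc hcc using hα
  refine ⟨fun i j => cc (fh.coeff j) i % p, fun i j => Nat.mod_lt _ hp.pos, ?_⟩
  set I : Ideal (Polynomial F) := Ideal.span {g ^ (h + 1)} with hI
  rw [← Ideal.mem_span_singleton, ← hI, ← Ideal.Quotient.eq]
  set φ := Ideal.Quotient.mk I with hφ
  have hg0' : φ (g ^ (h + 1)) = 0 := by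
    rw [Ideal.Quotient.eq_zero_iff_mem, hI]
    exact Ideal.mem_span_singleton_self _
  have hu : φ (g ^ h) * φ (g ^ h) = 0 := by
    obtain ⟨k, hk⟩ : g ^ (h + 1) ∣ g ^ h * g ^ h := by
      rw [← pow_add]; exact pow_dvd_pow g (by omega)
    rw [← map_mul, hk, map_mul, hg0', zero_mul]
  have hcF : ∀ (i : Fin δ) (y : F), ((cc y i % p : ℕ) : F) = (cc y i : F) :=
    fun i y => (CharP.cast_eq_mod F p (cc y i)).symm
  have key : φ (∏ i : Fin δ, ∏ j : Fin r,
      (1 + Polynomial.C (α ^ (i : ℕ)) * X ^ (j : ℕ) * g ^ h) ^ (cc (fh.coeff j) i % p))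
      = 1 + φ fh * φ (g ^ h) := by
    rw [map_prod]
    have step : ∀ i ∈ (Finset.univ : Finset (Fin δ)), φ (∏ j : Fin r,
        (1 + Polynomial.C (α ^ (i : ℕ)) * X ^ (j : ℕ) * g ^ h) ^ (cc (fh.coeff j) i % p))
        = 1 + (∑ j : Fin r, ((cc (fh.coeff j) i % p : ℕ) : Polynomial F ⧸ I) *
            φ (Polynomial.C (α ^ (i : ℕ)) * X ^ (j : ℕ))) * φ (g ^ h) := by
      intro i _
      rw [map_prod]
      have e : ∀ j ∈ (Finset.univ : Finset (Fin r)),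
          φ ((1 + Polynomial.C (α ^ (i : ℕ)) * X ^ (j : ℕ) * g ^ h) ^ (cc (fh.coeff j) i % p))
          = 1 + (((cc (fh.coeff j) i % p : ℕ) : Polynomial F ⧸ I) *
              φ (Polynomial.C (α ^ (i : ℕ)) * X ^ (j : ℕ))) * φ (g ^ h) := by
        intro j _
        rw [map_pow, map_add, map_one, map_mul, aux_pow hu]
      rw [Finset.prod_congr rfl e, aux_prod hu]
    rw [Finset.prod_congr rfl step, aux_prod hu]
    congr 2
    have hfh' : fh = ∑ j : Fin r, Polynomial.C (fh.coeff j) * X ^ (j : ℕ) := by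
      have hnd : fh.natDegree < r := by
        rcases eq_or_ne fh 0 with h0 | h0
        · simp [h0]; omega
        · exact (Polynomial.natDegree_lt_iff_degree_lt h0).mpr hfh
      conv_lhs => rw [fh.as_sum_range' r hnd]
      rw [Finset.sum_range fun j => (Polynomial.monomial j) (fh.coeff j)]
      simp [Polynomial.C_mul_X_pow_eq_monomial]
    calc ∑ i : Fin δ, ∑ j : Fin r, ((cc (fh.coeff j) i % p : ℕ) : Polynomial F ⧸ I) *
            φ (Polynomial.C (α ^ (i : ℕ)) * X ^ (j : ℕ))
        = ∑ j : Fin r, ∑ i : Fin δ, φ (Polynomial.C ((cc (fh.coeff j) i : F) * α ^ (i : ℕ))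
            * X ^ (j : ℕ)) := by
          rw [Finset.sum_comm]
          refine Finset.sum_congr rfl fun j _ => Finset.sum_congr rfl fun i _ => ?_
          rw [← map_natCast φ, ← Polynomial.C_eq_natCast, ← map_mul]
          congr 1
          rw [hcF, Polynomial.C_mul]
          ring
      _ = φ fh := by
          simp only [← map_sum]
          congr 1
          conv_rhs => rw [hfh']
          refine Finset.sum_congr rfl fun j _ => ?_
          rw [← Finset.sum_mul, ← map_sum Polynomial.C]
          congr 2
          exact (hcc (fh.coeff j)).symm
  rw [key, hf, map_add, map_add, map_one, map_mul, map_mul, hg0', mul_zero, add_zero]
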